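/- For every c, m, n, q, h ∈ ℝ: exp(c·t₂) · Q(m,n,q,h) · exp(−c·t₂) = Q(m cosh c − q sinh c, n cosh c − h sinh c, −m sinh c + q cosh c, −n sinh c + h cosh c); that is, the one-parameter subgroup generated by the non-compact generator t₂ acts on the four charges as a boost mixing the gravitational charges (m,n) with the electromagnetic charges (q,h). -/

import Mathlib

open Matrix Complex

noncomputable section

/-- The signature-(2,1) metric `η`. -/
def η : Matrix (Fin 3) (Fin 3) ℂ := !![0,0,-1; 0,1,0; -1,0,0]

/-- The real Lie algebra `su(2,1) = {X : tr X = 0 and ηX + X†η = 0}` (as a set of matrices,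
with the matrix commutator as bracket). -/
def su21 : Set (Matrix (Fin 3) (Fin 3) ℂ) := {X | X.trace = 0 ∧ η * X + Xᴴ * η = 0}

def h4 : Matrix (Fin 3) (Fin 3) ℂ := !![1,0,0; 0,0,0; 0,0,-1]
def h5 : Matrix (Fin 3) (Fin 3) ℂ := !![I,0,0; 0,-2*I,0; 0,0,I]
def e4 : Matrix (Fin 3) (Fin 3) ℂ := !![0,1,0; 0,0,1; 0,0,0]
def e5 : Matrix (Fin 3) (Fin 3) ℂ := !![0,I,0; 0,0,-I; 0,0,0]
def e45 : Matrix (Fin 3) (Fin 3) ℂ := !![0,0,I; 0,0,0; 0,0,0]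
def f4 : Matrix (Fin 3) (Fin 3) ℂ := !![0,0,0; 1,0,0; 0,1,0]
def f5 : Matrix (Fin 3) (Fin 3) ℂ := !![0,0,0; I,0,0; 0,-I,0]
def f45 : Matrix (Fin 3) (Fin 3) ℂ := !![0,0,0; 0,0,0; I,0,0]
/-- The non-compact generator `t₂` of `k*`. -/
def t2 : Matrix (Fin 3) (Fin 3) ℂ := (Real.sqrt 2)⁻¹ • (e4 + f4)

/-- The charge matrix `Q(m,n,q,h)`. -/
def Qc (m n q h : ℝ) : Matrix (Fin 3) (Fin 3) ℂ :=
  (-m : ℝ) • h4 + n • (e45 - f45) - (q / Real.sqrt 2) • (e4 - f4) + (h / Real.sqrt 2) • (e5 + f5)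

local notation "sq2" => ((Real.sqrt 2 : ℝ) : ℂ)

lemma hs2 : sq2 * sq2 = 2 := by
  rw [← Complex.ofReal_mul, Real.mul_self_sqrt (by norm_num)]
  norm_num

lemma hs0 : sq2 ≠ 0 := by
  simp [Real.sqrt_eq_zero']

lemma hsk2 : sq2 ^ 2 = 2 := by rw [sq]; exact hs2
lemma hsk3 : sq2 ^ 3 = 2 * sq2 := by rw [pow_succ, hsk2]
lemma hsk4 : sq2 ^ 4 = 4 := by rw [pow_succ, hsk3]; linear_combination 2 * hs2
lemma hsk5 : sq2 ^ 5 = 4 * sq2 := by rw [pow_succ, hsk4]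
lemma hsk6 : sq2 ^ 6 = 8 := by rw [pow_succ, hsk5]; linear_combination 4 * hs2

lemma hsinv : (sq2)⁻¹ = sq2 / 2 := by
  field_simp
  linear_combination -hs2

lemma diag3 (a b d : ℂ) :
    Matrix.diagonal ![a, b, d] = !![a,0,0; 0,b,0; 0,0,d] := by
  ext i j
  fin_cases i <;> fin_cases j <;>
    simp [Matrix.diagonal_apply, Matrix.vecHead, Matrix.vecTail]

def P : Matrix (Fin 3) (Fin 3) ℂ := !![1,1,1; sq2,0,-sq2; 1,-1,1]
def Pinv : Matrix (Fin 3) (Fin 3) ℂ := (4:ℂ)⁻¹ • !![1,sq2,1; 2,0,-2; 1,-sq2,1]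

lemma PPinv : P * Pinv = 1 := by
  ext i j
  fin_cases i <;> fin_cases j <;>
    simp [P, Pinv, Matrix.mul_apply, Fin.sum_univ_succ] <;>
    field_simp <;>
    (first | ring1 | linear_combination hs2 | linear_combination -hs2 | linear_combination 2*hs2)

lemma hPunit : IsUnit P := by
  rw [Matrix.isUnit_iff_isUnit_det]
  have := Matrix.det_mul P Pinv
  rw [PPinv, Matrix.det_one] at this
  exact IsUnit.of_mul_eq_one _ this.symm

lemma hPinv : P⁻¹ = Pinv := Matrix.inv_eq_right_inv PPinv

/-- Explicit form of `exp (c • t2)` in terms of `cosh` and `sinh`. -/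
def Ex (c : ℝ) : Matrix (Fin 3) (Fin 3) ℂ :=
  (2:ℂ)⁻¹ • !![((Real.cosh c : ℝ) : ℂ) + 1, sq2 * ((Real.sinh c : ℝ) : ℂ),
      ((Real.cosh c : ℝ) : ℂ) - 1;
    sq2 * ((Real.sinh c : ℝ) : ℂ), 2 * ((Real.cosh c : ℝ) : ℂ), sq2 * ((Real.sinh c : ℝ) : ℂ);
    ((Real.cosh c : ℝ) : ℂ) - 1, sq2 * ((Real.sinh c : ℝ) : ℂ), ((Real.cosh c : ℝ) : ℂ) + 1]

set_option maxHeartbeats 1000000 in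
lemma exp_t2 (c : ℝ) : NormedSpace.exp (c • t2) = Ex c := by
  have h : c • t2 = P * Matrix.diagonal ![(c : ℂ), 0, (-c : ℂ)] * P⁻¹ := by
    rw [hPinv, diag3]
    ext i j
    fin_cases i <;> fin_cases j <;>
      simp [t2, e4, f4, P, Pinv, Matrix.mul_apply, Fin.sum_univ_succ,
        Complex.real_smul, Complex.ofReal_inv] <;>
      field_simp <;>
      ring_nf <;>
      simp only [hsk2, hsk3, hsk4, hsk5, hsk6] <;>
      ring1
  rw [h, Matrix.exp_conj P _ hPunit, hPinv, Matrix.exp_diagonal]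
  have hv : NormedSpace.exp ![(c : ℂ), 0, (-c : ℂ)]
      = ![Complex.exp c, 1, Complex.exp (-c)] := by
    funext i
    rw [Pi.coe_exp]
    fin_cases i <;> simp [← Complex.exp_eq_exp_ℂ]
  rw [hv, diag3]
  ext i j
  fin_cases i <;> fin_cases j <;>
    simp [P, Pinv, Ex, Matrix.mul_apply, Fin.sum_univ_succ, Complex.cosh, Complex.sinh,
      Complex.exp_neg] <;>
    field_simp <;>
    ring_nf <;>
    simp only [hsk2, hsk3, hsk4, hsk5, hsk6] <;>
    ring1

set_option maxHeartbeats 1000000 in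
/-- The one-parameter subgroup generated by `t₂` acts on the four charges as a boost mixing
the gravitational charges `(m,n)` with the electromagnetic charges `(q,h)`. -/
theorem t2_boost_action_on_charges :
    ∀ c m n q h : ℝ,
      NormedSpace.exp (c • t2) * Qc m n q h * NormedSpace.exp ((-c) • t2) =
        Qc (m * Real.cosh c - q * Real.sinh c) (n * Real.cosh c - h * Real.sinh c)
           (-m * Real.sinh c + q * Real.cosh c) (-n * Real.sinh c + h * Real.cosh c) := by
  intro c m n q h
  have hC2 : Complex.cosh c ^ 2 = 1 + Complex.sinh c ^ 2 := by
    rw [Complex.cosh_sq]; ring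
  rw [exp_t2 c, exp_t2 (-c)]
  ext i j
  fin_cases i <;> fin_cases j <;>
    simp [Qc, h4, e4, f4, e5, f5, e45, f45, Ex, Matrix.mul_apply, Fin.sum_univ_succ,
      Complex.real_smul, Real.cosh_neg, Real.sinh_neg] <;>
    push_cast <;>
    simp only [div_eq_mul_inv, hsinv] <;>
    ring_nf <;>
    simp only [hsk2, hsk3, hsk4, hsk5, hsk6, hC2] <;>
    ring1
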